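/- Let ν and ν̃ be probability measures on (Fin 2 → ℝ), both concentrated on vectors with coordinates in [0,1]. Then the Bernoulli compound of ν equals the Bernoulli compound of ν̃ (as measures on Fin 2 → Bool) if and only if ∫ y 0 dν = ∫ y 0 dν̃, ∫ y 1 dν = ∫ y 1 dν̃, and ∫ (y 0)·(y 1) dν = ∫ (y 0)·(y 1) dν̃. -/

import Mathlib

open MeasureTheory

/-- The Bernoulli measure on `Bool` assigning probability `r` to `true` (for `r ∈ [0,1]`). -/
noncomputable def bernoulliMeasure (r : ℝ) : Measure Bool :=
  ENNReal.ofReal r • Measure.dirac true + ENNReal.ofReal (1 - r) • Measure.dirac false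

/-- Bernoulli compound of a measure `ν` on `Fin 2 → ℝ`: conditionally on `y ~ ν`, the
coordinates are independent Bernoulli variables with success probabilities `y j`. -/
noncomputable def bernoulliCompound (ν : Measure (Fin 2 → ℝ)) : Measure (Fin 2 → Bool) :=
  ν.bind (fun y => Measure.pi fun j => bernoulliMeasure (y j))

/-- Two Bernoulli compounds on `Fin 2 → Bool` agree iff the mixing measures have the
same first moments and the same mixed second moment. -/
lemma bernoulliMeasure_singleton (r : ℝ) (b : Bool) :
    bernoulliMeasure r {b} = ENNReal.ofReal (if b then r else 1 - r) := by
  cases b <;> simp [bernoulliMeasure, Measure.dirac_apply]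

instance (r : ℝ) : IsFiniteMeasure (bernoulliMeasure r) := by
  constructor
  simp only [bernoulliMeasure, Measure.coe_add, Pi.add_apply, Measure.smul_apply,
    measure_univ, smul_eq_mul, mul_one]
  exact ENNReal.add_lt_top.mpr ⟨ENNReal.ofReal_lt_top, ENNReal.ofReal_lt_top⟩

def gb (b : Fin 2 → Bool) (y : Fin 2 → ℝ) : ℝ := ∏ j, (if b j then y j else 1 - y j)

lemma K_singleton (y : Fin 2 → ℝ) (b : Fin 2 → Bool) :
    (Measure.pi fun j => bernoulliMeasure (y j)) {b}
      = ∏ j, ENNReal.ofReal (if b j then y j else 1 - y j) := by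
  rw [show ({b} : Set (Fin 2 → Bool)) = Set.pi Set.univ (fun j => {b j}) from
    (Set.univ_pi_singleton b).symm, Measure.pi_pi]
  simp [bernoulliMeasure_singleton]

lemma measurable_K :
    Measurable (fun y : Fin 2 → ℝ => Measure.pi fun j => bernoulliMeasure (y j)) := by
  apply Measure.measurable_of_measurable_coe
  intro s hs
  have h : ∀ y : Fin 2 → ℝ, (Measure.pi fun j => bernoulliMeasure (y j)) s
      = ∑' b : Fin 2 → Bool,
          s.indicator (fun b => (Measure.pi fun j => bernoulliMeasure (y j)) {b}) b :=
    fun y => (Measure.tsum_indicator_apply_singleton _ s hs).symm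
  simp_rw [h]
  apply Measurable.ennreal_tsum
  intro b
  by_cases hb : b ∈ s
  · have e : (fun y : Fin 2 → ℝ =>
        s.indicator (fun b => (Measure.pi fun j => bernoulliMeasure (y j)) {b}) b)
        = fun y => ∏ j, ENNReal.ofReal (if b j then y j else 1 - y j) := by
      funext y; rw [Set.indicator_of_mem hb, K_singleton]
    rw [e]
    apply Finset.measurable_prod
    intro j _
    cases hbj : b j <;> simp only [hbj, Bool.false_eq_true, eq_self_iff_true, if_true, if_false] <;>
      exact ENNReal.measurable_ofReal.comp (by fun_prop)
  · have e : (fun y : Fin 2 → ℝ =>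
        s.indicator (fun b => (Measure.pi fun j => bernoulliMeasure (y j)) {b}) b)
        = fun _ => 0 := funext fun y => Set.indicator_of_notMem hb _
    rw [e]; exact measurable_const

lemma measurable_gb (b : Fin 2 → Bool) : Measurable (gb b) := by
  apply Finset.measurable_prod
  intro j _
  cases hbj : b j <;> simp only [hbj, Bool.false_eq_true, eq_self_iff_true, if_true, if_false] <;> fun_prop

section
variable (ν : Measure (Fin 2 → ℝ)) [IsProbabilityMeasure ν]
  (hν : ∀ᵐ y ∂ν, ∀ j, y j ∈ Set.Icc (0 : ℝ) 1)

lemma integrable_bdd {f : (Fin 2 → ℝ) → ℝ} (hf : Measurable f)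
    (h : ∀ᵐ y ∂ν, |f y| ≤ 1) : Integrable f ν :=
  ⟨hf.aestronglyMeasurable, HasFiniteIntegral.of_bounded (C := 1) (by
    filter_upwards [h] with y hy using by rwa [Real.norm_eq_abs])⟩

include hν in
lemma gb_nonneg (b : Fin 2 → Bool) : 0 ≤ᵐ[ν] gb b := by
  filter_upwards [hν] with y hy
  apply Finset.prod_nonneg
  intro j _
  cases hbj : b j <;> simp only [hbj, Bool.false_eq_true, eq_self_iff_true, if_true, if_false]
  · linarith [(hy j).2]
  · exact (hy j).1

include hν in
lemma integrable_gb (b : Fin 2 → Bool) : Integrable (gb b) ν := by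
  apply integrable_bdd ν (measurable_gb b)
  filter_upwards [hν] with y hy
  rw [gb, Finset.abs_prod]
  apply Finset.prod_le_one
  · intro j _; exact abs_nonneg _
  · intro j _
    cases hbj : b j <;> simp only [hbj, Bool.false_eq_true, eq_self_iff_true, if_true, if_false] <;> rw [abs_le] <;>
      constructor <;> linarith [(hy j).1, (hy j).2]

include hν in
lemma compound_singleton (b : Fin 2 → Bool) :
    bernoulliCompound ν {b} = ENNReal.ofReal (∫ y, gb b y ∂ν) := by
  rw [bernoulliCompound, Measure.bind_apply (measurableSet_singleton b)
    measurable_K.aemeasurable,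
    MeasureTheory.ofReal_integral_eq_lintegral_ofReal (integrable_gb ν hν b) (gb_nonneg ν hν b)]
  apply lintegral_congr_ae
  filter_upwards [hν] with y hy
  rw [K_singleton, gb, ENNReal.ofReal_prod_of_nonneg]
  intro j _
  cases hbj : b j <;> simp only [hbj, Bool.false_eq_true, eq_self_iff_true, if_true, if_false]
  · linarith [(hy j).2]
  · exact (hy j).1

include hν in
lemma integrable_moments :
    Integrable (fun y => y 0) ν ∧ Integrable (fun y => y 1) ν ∧
      Integrable (fun y => y 0 * y 1) ν := by
  refine ⟨integrable_bdd ν (measurable_pi_apply 0) ?_,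
    integrable_bdd ν (measurable_pi_apply 1) ?_,
    integrable_bdd ν ((measurable_pi_apply 0).mul (measurable_pi_apply 1)) ?_⟩ <;>
  · filter_upwards [hν] with y hy
    have h0 := hy 0; have h1 := hy 1
    simp only [Set.mem_Icc] at h0 h1
    rw [abs_le]
    constructor <;> nlinarith [h0.1, h0.2, h1.1, h1.2]

include hν in
lemma integral_gb (b : Fin 2 → Bool) :
    ∫ y, gb b y ∂ν =
      if b 0 then
        (if b 1 then ∫ y, y 0 * y 1 ∂ν else (∫ y, y 0 ∂ν) - ∫ y, y 0 * y 1 ∂ν)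
      else
        (if b 1 then (∫ y, y 1 ∂ν) - ∫ y, y 0 * y 1 ∂ν
         else 1 - (∫ y, y 0 ∂ν) - (∫ y, y 1 ∂ν) + ∫ y, y 0 * y 1 ∂ν) := by
  obtain ⟨i0, i1, i01⟩ := integrable_moments ν hν
  have hgb : ∀ y, gb b y = (if b 0 then y 0 else 1 - y 0) * (if b 1 then y 1 else 1 - y 1) := by
    intro y; rw [gb, Fin.prod_univ_two]
  cases hb0 : b 0 <;> cases hb1 : b 1 <;>
    simp only [hb0, hb1, Bool.false_eq_true, eq_self_iff_true, if_true, if_false] <;>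
    simp_rw [hgb] <;>
    simp only [hb0, hb1, Bool.false_eq_true, eq_self_iff_true, if_true, if_false]
  · -- false, false : (1 - y0) * (1 - y1)
    have e : (fun y : Fin 2 → ℝ => (1 - y 0) * (1 - y 1))
        = fun y => 1 - y 0 - y 1 + y 0 * y 1 := by funext y; ring
    have hf1 : Integrable (fun y : Fin 2 → ℝ => 1 - y 0) ν := by
      exact (integrable_const 1).sub i0
    have hf2 : Integrable (fun y : Fin 2 → ℝ => 1 - y 0 - y 1) ν := by exact hf1.sub i1
    have A : ∫ y, (1 - y 0 - y 1) + y 0 * y 1 ∂ν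
        = (∫ y, 1 - y 0 - y 1 ∂ν) + ∫ y, y 0 * y 1 ∂ν := by exact integral_add hf2 i01
    have B : ∫ y, 1 - y 0 - y 1 ∂ν = (∫ y, 1 - y 0 ∂ν) - ∫ y, y 1 ∂ν := by
      exact integral_sub hf1 i1
    have C : ∫ y, 1 - y 0 ∂ν = (∫ y, (1:ℝ) ∂ν) - ∫ y, y 0 ∂ν := by
      exact integral_sub (integrable_const 1) i0
    have D : ∫ y, (1:ℝ) ∂ν = 1 := by simp
    rw [e, A, B, C, D]
  · -- false, true : (1 - y0) * y1
    have e : (fun y : Fin 2 → ℝ => (1 - y 0) * y 1) = fun y => y 1 - y 0 * y 1 := by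
      funext y; ring
    rw [e]; exact integral_sub i1 i01
  · -- true, false
    have e : (fun y : Fin 2 → ℝ => y 0 * (1 - y 1)) = fun y => y 0 - y 0 * y 1 := by
      funext y; ring
    rw [e]; exact integral_sub i0 i01

end

theorem bernoulliCompound_eq_iff_moments
    (ν ν' : Measure (Fin 2 → ℝ)) [IsProbabilityMeasure ν] [IsProbabilityMeasure ν']
    (hν : ∀ᵐ y ∂ν, ∀ j, y j ∈ Set.Icc (0 : ℝ) 1)
    (hν' : ∀ᵐ y ∂ν', ∀ j, y j ∈ Set.Icc (0 : ℝ) 1) :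
    bernoulliCompound ν = bernoulliCompound ν'
      ↔ (∫ y, y 0 ∂ν = ∫ y, y 0 ∂ν'
          ∧ ∫ y, y 1 ∂ν = ∫ y, y 1 ∂ν'
          ∧ ∫ y, (y 0) * (y 1) ∂ν = ∫ y, (y 0) * (y 1) ∂ν') := by
  constructor
  · intro h
    have key : ∀ b : Fin 2 → Bool, ∫ y, gb b y ∂ν = ∫ y, gb b y ∂ν' := by
      intro b
      have h1 : bernoulliCompound ν {b} = bernoulliCompound ν' {b} := by rw [h]
      rw [compound_singleton ν hν b, compound_singleton ν' hν' b] at h1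
      exact (ENNReal.ofReal_eq_ofReal_iff
        (integral_nonneg_of_ae (gb_nonneg ν hν b))
        (integral_nonneg_of_ae (gb_nonneg ν' hν' b))).mp h1
    have k1 := key ![true, true]
    have k2 := key ![true, false]
    have k3 := key ![false, true]
    rw [integral_gb ν hν, integral_gb ν' hν'] at k1 k2 k3
    simp only [Matrix.cons_val_zero, Matrix.cons_val_one, Matrix.head_cons,
      Bool.false_eq_true, eq_self_iff_true, if_true, if_false] at k1 k2 k3
    exact ⟨by linarith, by linarith, k1⟩
  · rintro ⟨h0, h1, h01⟩
    apply Measure.ext_of_singleton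
    intro b
    rw [compound_singleton ν hν b, compound_singleton ν' hν' b,
      integral_gb ν hν b, integral_gb ν' hν' b, h0, h1, h01]
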